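/- Assume gcd(a_0,…,a_{n+1}) = 1 and let f ∈ S be nonzero weighted-homogeneous of degree d. Set H := {φ ∈ Aut(S) : φ(f) = f} and G_f := {φ ∈ Aut(S) : φ(f) = c·f for some c ∈ ℂ^×}, with Δ ≤ G_f the subgroup of automorphisms x_i ↦ t^{a_i}x_i, t ∈ ℂ^×. Then the natural homomorphism H → G_f/Δ is surjective and its kernel is the cyclic group of order d consisting of the automorphisms x_i ↦ t^{a_i} x_i with t^d = 1. In particular, if G_f/Δ is finite then |H| = d·|G_f/Δ|. -/

import Mathlib

open MvPolynomial

noncomputable section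

/-- The predicate that an algebra automorphism of `ℂ[x_0,…,x_{n+1}]` is graded with
respect to the weights `a`, i.e. preserves all weighted-homogeneous pieces. -/
def IsGradedAut {n : ℕ} (a : Fin (n + 2) → ℕ)
    (φ : MvPolynomial (Fin (n + 2)) ℂ ≃ₐ[ℂ] MvPolynomial (Fin (n + 2)) ℂ) : Prop :=
  ∀ (d : ℕ) (f : MvPolynomial (Fin (n + 2)) ℂ),
    f.IsWeightedHomogeneous a d ↔ (φ f).IsWeightedHomogeneous a d

lemma IsGradedAut.one {n : ℕ} (a : Fin (n + 2) → ℕ) : IsGradedAut a 1 := by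
  intro d f
  rfl

lemma IsGradedAut.mul {n : ℕ} {a : Fin (n + 2) → ℕ}
    {φ ψ : MvPolynomial (Fin (n + 2)) ℂ ≃ₐ[ℂ] MvPolynomial (Fin (n + 2)) ℂ}
    (hφ : IsGradedAut a φ) (hψ : IsGradedAut a ψ) : IsGradedAut a (φ * ψ) := by
  intro d f
  rw [AlgEquiv.mul_apply]
  exact (hψ d f).trans (hφ d (ψ f))

lemma IsGradedAut.inv {n : ℕ} {a : Fin (n + 2) → ℕ}
    {φ : MvPolynomial (Fin (n + 2)) ℂ ≃ₐ[ℂ] MvPolynomial (Fin (n + 2)) ℂ}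
    (hφ : IsGradedAut a φ) : IsGradedAut a φ⁻¹ := by
  intro d f
  have h := hφ d (φ⁻¹ f)
  rw [show φ (φ⁻¹ f) = f from φ.apply_symm_apply f] at h
  exact h.symm

/-- The group of graded automorphisms `Aut(S)`. -/
def gradedAut {n : ℕ} (a : Fin (n + 2) → ℕ) :
    Subgroup (MvPolynomial (Fin (n + 2)) ℂ ≃ₐ[ℂ] MvPolynomial (Fin (n + 2)) ℂ) where
  carrier := {φ | IsGradedAut a φ}
  one_mem' := IsGradedAut.one a
  mul_mem' hφ hψ := hφ.mul hψ
  inv_mem' hφ := hφ.inv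

/-- The group `G_f` of graded automorphisms mapping `f` to a nonzero scalar multiple of itself. -/
def linGroup {n : ℕ} (a : Fin (n + 2) → ℕ) (f : MvPolynomial (Fin (n + 2)) ℂ) :
    Subgroup (MvPolynomial (Fin (n + 2)) ℂ ≃ₐ[ℂ] MvPolynomial (Fin (n + 2)) ℂ) where
  carrier := {φ | IsGradedAut a φ ∧ ∃ c : ℂˣ, φ f = (c : ℂ) • f}
  one_mem' := ⟨IsGradedAut.one a, 1, by simp⟩
  mul_mem' := by
    rintro φ ψ ⟨hφ, c₁, hc₁⟩ ⟨hψ, c₂, hc₂⟩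
    refine ⟨hφ.mul hψ, c₁ * c₂, ?_⟩
    rw [AlgEquiv.mul_apply, hc₂, map_smul, hc₁, smul_smul, Units.val_mul, mul_comm]
  inv_mem' := by
    rintro φ ⟨hφ, c, hc⟩
    refine ⟨hφ.inv, c⁻¹, ?_⟩
    rw [show φ⁻¹ f = φ.symm f from rfl, AlgEquiv.symm_apply_eq, map_smul, hc, smul_smul]
    simp

/-- The subgroup `Δ` of diagonal scalar automorphisms `x_i ↦ t^{a_i} x_i`. -/
def diagSubgroup {n : ℕ} (a : Fin (n + 2) → ℕ) :
    Subgroup (MvPolynomial (Fin (n + 2)) ℂ ≃ₐ[ℂ] MvPolynomial (Fin (n + 2)) ℂ) where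
  carrier := {φ | ∃ t : ℂˣ, ∀ i, φ (X i) = ((t : ℂ) ^ (a i)) • X i}
  one_mem' := ⟨1, fun i => by simp⟩
  mul_mem' := by
    rintro φ ψ ⟨t, ht⟩ ⟨s, hs⟩
    refine ⟨t * s, fun i => ?_⟩
    rw [AlgEquiv.mul_apply, hs i, map_smul, ht i, smul_smul, Units.val_mul, mul_pow, mul_comm]
  inv_mem' := by
    rintro φ ⟨t, ht⟩
    refine ⟨t⁻¹, fun i => ?_⟩
    have key : φ (((t⁻¹ : ℂˣ) : ℂ) ^ (a i) • X i) = X i := by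
      rw [map_smul, ht i, smul_smul, ← mul_pow]
      norm_num
    rw [show φ⁻¹ (X i) = φ.symm (X i) from rfl, AlgEquiv.symm_apply_eq]
    exact key.symm

/-- The group `H` of graded automorphisms fixing the polynomial `f`. -/
def fixGroup {n : ℕ} (a : Fin (n + 2) → ℕ) (f : MvPolynomial (Fin (n + 2)) ℂ) :
    Subgroup (MvPolynomial (Fin (n + 2)) ℂ ≃ₐ[ℂ] MvPolynomial (Fin (n + 2)) ℂ) where
  carrier := {φ | IsGradedAut a φ ∧ φ f = f}
  one_mem' := ⟨IsGradedAut.one a, by rw [AlgEquiv.one_apply]⟩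
  mul_mem' := by
    rintro φ ψ ⟨hφ, h1⟩ ⟨hψ, h2⟩
    exact ⟨hφ.mul hψ, by rw [AlgEquiv.mul_apply, h2, h1]⟩
  inv_mem' := by
    rintro φ ⟨hφ, h1⟩
    refine ⟨hφ.inv, ?_⟩
    rw [show φ⁻¹ f = φ.symm f from rfl, AlgEquiv.symm_apply_eq, h1]

variable {n : ℕ}

local notation "S" => MvPolynomial (Fin (n + 2)) ℂ

lemma algEquiv_ext {φ ψ : S ≃ₐ[ℂ] S} (h : ∀ i, φ (X i) = ψ (X i)) : φ = ψ := by
  have : (φ : S →ₐ[ℂ] S) = (ψ : S →ₐ[ℂ] S) := by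
    exact MvPolynomial.algHom_ext fun i => h i
  exact AlgEquiv.ext fun x => AlgHom.congr_fun this x

lemma diag_monomial (a : Fin (n + 2) → ℕ) (t : ℂ) (m : Fin (n + 2) →₀ ℕ) (c : ℂ) :
    aeval (fun i => (t ^ a i) • (X i : S)) (monomial m c)
      = (t ^ ((Finsupp.weight a) m)) • monomial m c := by
  rw [aeval_monomial, Finsupp.weight_apply, Finsupp.prod, Finsupp.sum, monomial_eq,
    Finsupp.prod]
  simp only [smul_eq_C_mul, mul_pow, ← map_pow, ← pow_mul, Finset.prod_mul_distrib,
    ← map_prod, Finset.prod_pow_eq_pow_sum, smul_eq_mul, algebraMap_eq]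
  rw [show ∑ i ∈ m.support, a i * m i = ∑ i ∈ m.support, m i * a i from
    Finset.sum_congr rfl fun i _ => mul_comm _ _]
  ring

lemma diag_coeff (a : Fin (n + 2) → ℕ) (t : ℂ) (g : S) (m : Fin (n + 2) →₀ ℕ) :
    coeff m (aeval (fun i => (t ^ a i) • (X i : S)) g)
      = t ^ ((Finsupp.weight a) m) * coeff m g := by
  conv_lhs => rw [g.as_sum]
  rw [map_sum, MvPolynomial.coeff_sum]
  simp only [diag_monomial, coeff_smul, coeff_monomial, smul_eq_mul, mul_ite, mul_zero]
  rw [Finset.sum_ite_eq' g.support m (fun m' => t ^ ((Finsupp.weight a) m') * coeff m' g)]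
  by_cases hm : m ∈ g.support
  · simp [hm]
  · simp [hm, MvPolynomial.notMem_support_iff.mp hm]

/-- The diagonal automorphism `x_i ↦ t^{a_i} x_i`. -/
def diagAut (a : Fin (n + 2) → ℕ) (t : ℂˣ) : S ≃ₐ[ℂ] S :=
  AlgEquiv.ofAlgHom (aeval fun i => ((t : ℂ) ^ a i) • X i)
    (aeval fun i => (((t⁻¹ : ℂˣ) : ℂ) ^ a i) • X i)
    (by
      apply MvPolynomial.algHom_ext
      intro i
      simp [smul_smul, ← mul_pow])
    (by
      apply MvPolynomial.algHom_ext
      intro i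
      simp [smul_smul, ← mul_pow])

lemma diagAut_apply (a : Fin (n + 2) → ℕ) (t : ℂˣ) (g : S) :
    diagAut a t g = aeval (fun i => ((t : ℂ) ^ a i) • X i) g := rfl

lemma diagAut_apply_X (a : Fin (n + 2) → ℕ) (t : ℂˣ) (i : Fin (n + 2)) :
    diagAut a t (X i) = ((t : ℂ) ^ a i) • X i := by
  rw [diagAut_apply, aeval_X]

/-- Diagonal automorphisms as a monoid hom from `ℂˣ`. -/
def diagHom (a : Fin (n + 2) → ℕ) : ℂˣ →* (S ≃ₐ[ℂ] S) where
  toFun := diagAut a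
  map_one' := algEquiv_ext fun i => by simp [diagAut_apply_X]
  map_mul' t s := algEquiv_ext fun i => by
    simp [diagAut_apply_X, smul_smul, mul_pow, mul_comm]

lemma apply_of_diag {a : Fin (n + 2) → ℕ} {φ : S ≃ₐ[ℂ] S} {t : ℂ}
    (hφ : ∀ i, φ (X i) = (t ^ a i) • X i) {e : ℕ} {g : S}
    (hg : g.IsWeightedHomogeneous a e) : φ g = (t ^ e) • g := by
  have h1 : φ g = aeval (fun i => (t ^ a i) • (X i : S)) g := by
    have := MvPolynomial.aeval_unique (φ : S →ₐ[ℂ] S)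
    calc φ g = (φ : S →ₐ[ℂ] S) g := rfl
    _ = aeval ((φ : S →ₐ[ℂ] S) ∘ X) g := by rw [← this]
    _ = aeval (fun i => (t ^ a i) • (X i : S)) g := by
        have hv : ((φ : S →ₐ[ℂ] S) ∘ X) = fun i => (t ^ a i) • (X i : S) :=
          funext fun i => hφ i
        rw [hv]
  rw [h1]
  apply MvPolynomial.ext
  intro m
  rw [diag_coeff, coeff_smul, smul_eq_mul]
  by_cases hm : coeff m g = 0
  · rw [hm, mul_zero, mul_zero]
  · rw [hg hm]

lemma diag_isGradedAut (a : Fin (n + 2) → ℕ) (t : ℂˣ) : IsGradedAut a (diagAut a t) := by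
  intro e g
  have key : ∀ m : Fin (n + 2) →₀ ℕ,
      coeff m (diagAut a t g) = (t : ℂ) ^ ((Finsupp.weight a) m) * coeff m g := fun m => by
    rw [diagAut_apply, diag_coeff]
  constructor
  · intro h m hm
    rw [key m] at hm
    exact h (right_ne_zero_of_mul hm)
  · intro h m hm
    have hne : coeff m (diagAut a t g) ≠ 0 := by
      rw [key m]
      exact mul_ne_zero (pow_ne_zero _ (Units.ne_zero t)) hm
    exact h hne



lemma units_eq_one_of_pow {a : Fin (n + 2) → ℕ} (hgcd : Finset.univ.gcd a = 1)
    (t : ℂˣ) (h : ∀ i : Fin (n + 2), t ^ a i = 1) : t = 1 := by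
  have hdvd : orderOf t ∣ Finset.univ.gcd a :=
    Finset.dvd_gcd fun i _ => orderOf_dvd_of_pow_eq_one (h i)
  rw [hgcd, Nat.dvd_one] at hdvd
  exact orderOf_eq_one_iff.mp hdvd

lemma smul_X_inj {c c' : ℂ} {i : Fin (n + 2)} (h : c • (X i : S) = c' • X i) : c = c' := by
  have h0 : (c - c') • (X i : S) = 0 := by rw [sub_smul, h, sub_self]
  rcases smul_eq_zero.mp h0 with h0 | h0
  · exact sub_eq_zero.mp h0
  · exact absurd h0 (MvPolynomial.X_ne_zero i)


lemma graded_comm {a : Fin (n + 2) → ℕ} {ψ : S ≃ₐ[ℂ] S} (hψ : IsGradedAut a ψ) (t : ℂˣ)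
    (g : S) : ψ (diagAut a t g) = diagAut a t (ψ g) := by
  classical
  conv_lhs => rw [← sum_weightedHomogeneousComponent (w := a) (φ := g)]
  conv_rhs => rw [← sum_weightedHomogeneousComponent (w := a) (φ := g)]
  rw [finsum_eq_sum _ (weightedHomogeneousComponent_finsupp g)]
  rw [map_sum, map_sum, map_sum, map_sum]
  apply Finset.sum_congr rfl
  intro e _
  have hge : (weightedHomogeneousComponent a e g).IsWeightedHomogeneous a e :=
    weightedHomogeneousComponent_isWeightedHomogeneous e g
  have h1 : diagAut a t (weightedHomogeneousComponent a e g)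
      = ((t : ℂ) ^ e) • (weightedHomogeneousComponent a e g) :=
    apply_of_diag (diagAut_apply_X a t) hge
  have h2 : (ψ (weightedHomogeneousComponent a e g)).IsWeightedHomogeneous a e :=
    (hψ e _).mp hge
  have h3 : diagAut a t (ψ (weightedHomogeneousComponent a e g))
      = ((t : ℂ) ^ e) • ψ (weightedHomogeneousComponent a e g) :=
    apply_of_diag (diagAut_apply_X a t) h2
  rw [h1, h3, map_smul]

/-- Suppose `gcd(a_0,…,a_{n+1}) = 1` and `f` is nonzero weighted-homogeneous
of degree `d > 0`. Let `H = {φ ∈ Aut(S) : φ(f) = f}`. Then the natural map `H → G_f/Δ` is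
surjective (every element of `G_f` is, modulo `Δ`, an element of `H`), its kernel `H ∩ Δ` is
the cyclic group of order `d` consisting of the automorphisms `x_i ↦ t^{a_i}x_i` with
`t^d = 1`; in particular `|H| = d·|G_f/Δ|` when `G_f/Δ` is finite. -/
theorem fix_group_covers_lin {n : ℕ} (a : Fin (n + 2) → ℕ) (ha : ∀ i, 0 < a i)
    (hgcd : Finset.univ.gcd a = 1) (d : ℕ) (hd : 0 < d)
    (f : MvPolynomial (Fin (n + 2)) ℂ) (hf0 : f ≠ 0) (hfh : f.IsWeightedHomogeneous a d) :
    (∀ ψ ∈ linGroup a f, ∃ φ ∈ fixGroup a f, ∃ δ ∈ diagSubgroup a, ψ = φ * δ) ∧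
    (∀ φ ∈ fixGroup a f, (φ ∈ diagSubgroup a ↔
        ∃ t : ℂˣ, (t : ℂ) ^ d = 1 ∧ ∀ i, φ (X i) = ((t : ℂ) ^ (a i)) • X i)) ∧
    IsCyclic ↥(fixGroup a f ⊓ diagSubgroup a) ∧
    Nat.card ↥(fixGroup a f ⊓ diagSubgroup a) = d ∧
    (Finite (linGroup a f ⧸ (diagSubgroup a).subgroupOf (linGroup a f)) →
      Nat.card (fixGroup a f) =
        d * Nat.card (linGroup a f ⧸ (diagSubgroup a).subgroupOf (linGroup a f))) := by
  have : NeZero d := ⟨hd.ne'⟩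
  have hdiag_f : ∀ t : ℂˣ, diagAut a t f = ((t : ℂ) ^ d) • f := fun t =>
    apply_of_diag (fun i => diagAut_apply_X a t i) hfh
  -- Part 1: surjectivity
  have part1 : ∀ ψ ∈ linGroup a f, ∃ φ ∈ fixGroup a f, ∃ δ ∈ diagSubgroup a, ψ = φ * δ := by
    rintro ψ ⟨hgr, c, hc⟩
    obtain ⟨z, hz⟩ := IsAlgClosed.exists_pow_nat_eq (c : ℂ) hd
    have hz0 : z ≠ 0 := by
      rintro rfl
      rw [zero_pow hd.ne'] at hz
      exact c.ne_zero hz.symm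
    set t : ℂˣ := Units.mk0 z hz0 with htdef
    have htd : (t : ℂ) ^ d = (c : ℂ) := hz
    refine ⟨ψ * (diagHom a t)⁻¹, ⟨hgr.mul (diag_isGradedAut a t).inv, ?_⟩,
      diagHom a t, ⟨t, fun i => diagAut_apply_X a t i⟩, by group⟩
    have hinvf : (diagHom a t)⁻¹ f = ((t⁻¹ : ℂˣ) : ℂ) ^ d • f := by
      rw [← map_inv (diagHom a)]
      exact hdiag_f t⁻¹
    rw [AlgEquiv.mul_apply, hinvf, map_smul, hc, smul_smul]
    have : ((t⁻¹ : ℂˣ) : ℂ) ^ d * (c : ℂ) = 1 := by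
      rw [← htd]
      push_cast
      rw [← mul_pow, inv_mul_cancel₀ (Units.ne_zero t), one_pow]
    rw [this, one_smul]
  -- Part 2: characterization of the kernel
  have part2 : ∀ φ ∈ fixGroup a f, (φ ∈ diagSubgroup a ↔
      ∃ t : ℂˣ, (t : ℂ) ^ d = 1 ∧ ∀ i, φ (X i) = ((t : ℂ) ^ (a i)) • X i) := by
    rintro φ ⟨hgr, hfix⟩
    constructor
    · rintro ⟨t, ht⟩
      refine ⟨t, ?_, ht⟩
      have hφf : φ f = ((t : ℂ) ^ d) • f := apply_of_diag ht hfh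
      rw [hfix] at hφf
      have h0 : ((t : ℂ) ^ d - 1) • f = 0 := by rw [sub_smul, one_smul, ← hφf, sub_self]
      rcases smul_eq_zero.mp h0 with h0 | h0
      · exact sub_eq_zero.mp h0
      · exact absurd h0 hf0
    · rintro ⟨t, _, ht⟩
      exact ⟨t, ht⟩
  -- the equivalence with roots of unity
  have hmem : ∀ t : ℂˣ, t ∈ rootsOfUnity d ℂ →
      diagHom a t ∈ fixGroup a f ⊓ diagSubgroup a := by
    intro t ht
    rw [mem_rootsOfUnity] at ht
    have htd : (t : ℂ) ^ d = 1 := by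
      have := congrArg (Units.val) ht
      push_cast at this
      exact this
    refine Subgroup.mem_inf.mpr ⟨⟨diag_isGradedAut a t, ?_⟩, t, fun i => diagAut_apply_X a t i⟩
    show diagAut a t f = f
    rw [hdiag_f t, htd, one_smul]
  let Ψ : rootsOfUnity d ℂ →* ↥(fixGroup a f ⊓ diagSubgroup a) :=
    ((diagHom a).comp (rootsOfUnity d ℂ).subtype).codRestrict _ (fun t => hmem t.1 t.2)
  have hΨ : ∀ t, (Ψ t).1 = diagAut a t.1 := fun t => rfl
  have hinj : Function.Injective Ψ := by
    rw [injective_iff_map_eq_one]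
    intro t ht
    have h1 : diagAut a t.1 = 1 := by rw [← hΨ t, ht]; rfl
    have h2 : ∀ i : Fin (n + 2), t.1 ^ a i = 1 := by
      intro i
      have h0 : diagAut a t.1 (X i) = X i := by rw [h1]; rfl
      rw [diagAut_apply_X] at h0
      have h3 : ((t.1 : ℂ)) ^ a i = 1 := smul_X_inj (by rw [one_smul]; exact h0)
      exact Units.ext (by push_cast; exact h3)
    have := units_eq_one_of_pow hgcd t.1 h2
    exact Subtype.ext this
  have hsurj : Function.Surjective Ψ := by
    rintro ⟨φ, hφ⟩
    obtain ⟨hφH, hφΔ⟩ := Subgroup.mem_inf.mp hφ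
    obtain ⟨t, htd, ht⟩ := (part2 φ hφH).mp hφΔ
    have htu : t ∈ rootsOfUnity d ℂ := by
      rw [mem_rootsOfUnity]
      exact Units.ext (by push_cast; exact htd)
    refine ⟨⟨t, htu⟩, ?_⟩
    apply Subtype.ext
    show diagAut a t = φ
    exact algEquiv_ext fun i => by rw [diagAut_apply_X, ← ht i]
  have part3 : IsCyclic ↥(fixGroup a f ⊓ diagSubgroup a) := isCyclic_of_surjective Ψ hsurj
  have part4 : Nat.card ↥(fixGroup a f ⊓ diagSubgroup a) = d := by
    rw [← Nat.card_congr (MulEquiv.ofBijective Ψ ⟨hinj, hsurj⟩).toEquiv,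
      Complex.card_rootsOfUnity d]
  refine ⟨part1, part2, part3, part4, ?_⟩
  -- Part 5: the cardinality formula
  intro _
  have hHG : fixGroup a f ≤ linGroup a f := by
    rintro φ ⟨hgr, hfix⟩
    exact ⟨hgr, 1, by simp [hfix]⟩
  set Δ' := (diagSubgroup a).subgroupOf (linGroup a f) with hΔ'
  haveI hnormal : Δ'.Normal := by
    constructor
    rintro x hx g
    rw [hΔ', Subgroup.mem_subgroupOf] at hx ⊢
    obtain ⟨t, ht⟩ := hx
    have hxval : (x : MvPolynomial (Fin (n + 2)) ℂ ≃ₐ[ℂ] MvPolynomial (Fin (n + 2)) ℂ) = diagAut a t :=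
      algEquiv_ext fun i => by rw [ht i, diagAut_apply_X]
    have hcomm : (g : MvPolynomial (Fin (n + 2)) ℂ ≃ₐ[ℂ] MvPolynomial (Fin (n + 2)) ℂ) * diagAut a t = diagAut a t * (g : MvPolynomial (Fin (n + 2)) ℂ ≃ₐ[ℂ] MvPolynomial (Fin (n + 2)) ℂ) :=
      AlgEquiv.ext fun p => graded_comm g.2.1 t p
    have : ((g * x * g⁻¹ : ↥(linGroup a f)) : MvPolynomial (Fin (n + 2)) ℂ ≃ₐ[ℂ] MvPolynomial (Fin (n + 2)) ℂ)
        = (g : MvPolynomial (Fin (n + 2)) ℂ ≃ₐ[ℂ] MvPolynomial (Fin (n + 2)) ℂ) * diagAut a t * (g : MvPolynomial (Fin (n + 2)) ℂ ≃ₐ[ℂ] MvPolynomial (Fin (n + 2)) ℂ)⁻¹ := by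
      rw [← hxval]; rfl
    rw [this, hcomm, mul_assoc, mul_inv_cancel, mul_one]
    exact ⟨t, fun i => diagAut_apply_X a t i⟩
  let π : ↥(fixGroup a f) →* (↥(linGroup a f) ⧸ Δ') :=
    (QuotientGroup.mk' Δ').comp (Subgroup.inclusion hHG)
  have hπsurj : Function.Surjective π := by
    intro q
    induction q using QuotientGroup.induction_on with
    | H ψ =>
      obtain ⟨φ, hφ, δ, hδ, hψ⟩ := part1 ψ.1 ψ.2
      refine ⟨⟨φ, hφ⟩, ?_⟩
      show QuotientGroup.mk (Subgroup.inclusion hHG ⟨φ, hφ⟩) = QuotientGroup.mk ψ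
      rw [QuotientGroup.eq]
      rw [Subgroup.mem_subgroupOf]
      have : ((Subgroup.inclusion hHG ⟨φ, hφ⟩)⁻¹ * ψ : ↥(linGroup a f)).1 = φ⁻¹ * ψ.1 := rfl
      rw [this, hψ]
      have : φ⁻¹ * (φ * δ) = δ := by group
      rw [this]
      exact hδ
  have hker : π.ker = (diagSubgroup a).subgroupOf (fixGroup a f) := by
    ext x
    rw [MonoidHom.mem_ker]
    show QuotientGroup.mk' Δ' (Subgroup.inclusion hHG x) = 1 ↔ _
    rw [QuotientGroup.mk'_apply, QuotientGroup.eq_one_iff, Subgroup.mem_subgroupOf,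
      Subgroup.mem_subgroupOf]
    rfl
  have hkercard : Nat.card π.ker = d := by
    rw [hker]
    have heq : (diagSubgroup a).subgroupOf (fixGroup a f)
        = (fixGroup a f ⊓ diagSubgroup a).subgroupOf (fixGroup a f) := by
      ext x
      simp only [Subgroup.mem_subgroupOf, Subgroup.mem_inf]
      exact ⟨fun h => ⟨x.2, h⟩, fun h => h.2⟩
    rw [heq, Nat.card_congr (Subgroup.subgroupOfEquivOfLe inf_le_left).toEquiv]
    exact part4
  have hlag := Subgroup.card_eq_card_quotient_mul_card_subgroup π.ker
  rw [Nat.card_congr (QuotientGroup.quotientKerEquivOfSurjective π hπsurj).toEquiv] at hlag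
  rw [hlag, hkercard, mul_comm]


end
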